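/- For s = 0, the image of the homomorphism φ_0 : t^k f(D + k/2) ↦ Σ_{j∈ℤ} f(-j + k/2) E_{j-k,j} restricted to 𝒟⁻ (so f ∈ ℂ[w] with f(-w) = (-1)^{k+1}f(w)) lies in the subalgebra b̄⁻_∞ = {(a_{ij}) ∈ gl_∞ : a_{ij} = (-1)^{i+j+1} a_{-j,-i}}, i.e., every matrix φ_0(t^k f(D+k/2)) preserves (infinitesimally) the bilinear form B⁻(v_i, v_j) = (-1)^i δ_{i,-j}. -/
import Mathlib


open Polynomial

noncomputable abbrev Vmod := ℤ →₀ ℂ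

/-- `φ_0(t^k F(D))` acting on `⊕ ℂ v_j` by `v_j ↦ F(-j) v_{j-k}`
(here the operator `t^k F(D)` is encoded by its degree `k` and polynomial `F`). -/
noncomputable def Phi0 (k : ℤ) (F : Polynomial ℂ) (v : Vmod) : Vmod :=
  v.sum fun j c => Finsupp.single (j - k) (c * F.eval (-(j : ℂ)))

/-- The bilinear form `B⁻(v_i, v_j) = (-1)^i δ_{i,-j}`. -/
noncomputable def Bform (u v : Vmod) : ℂ :=
  u.sum fun i c => c * (-1 : ℂ) ^ i * v (-i)

lemma Phi0_apply (k : ℤ) (F : Polynomial ℂ) (v : Vmod) (m : ℤ) :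
    Phi0 k F v m = v (m + k) * F.eval (-((m + k : ℤ) : ℂ)) := by
  classical
  rw [Phi0, Finsupp.sum_apply, Finsupp.sum, Finset.sum_eq_single (m + k)]
  · have h : m + k - k = m := by omega
    rw [h, Finsupp.single_eq_same]
  · intro j hj hne
    rw [Finsupp.single_apply, if_neg (by omega)]
  · intro h
    simp [Finsupp.notMem_support_iff.mp h]

lemma Bform_Phi0_left (k : ℤ) (F : Polynomial ℂ) (u v : Vmod) :
    Bform (Phi0 k F u) v
      = u.sum fun j c => (c * F.eval (-(j : ℂ))) * (-1 : ℂ) ^ (j - k) * v (-(j - k)) := by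
  classical
  rw [Bform, Phi0, Finsupp.sum_sum_index]
  · refine Finsupp.sum_congr fun j _ => ?_
    rw [Finsupp.sum_single_index]
    ring
  · intro i; ring
  · intro i a b; ring

theorem Phi0_image_in_binfinity (k : ℤ) (f : Polynomial ℂ)
    (hf : f.comp (-X) = (-1 : ℂ) ^ (k + 1) • f) :
    ∀ u v : Vmod,
      Bform (Phi0 k (f.comp (X + C ((k : ℂ) / 2))) u) v +
        Bform u (Phi0 k (f.comp (X + C ((k : ℂ) / 2))) v) = 0 := by
  intro u v
  classical
  rw [Bform_Phi0_left]
  conv_lhs => rw [Bform]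
  simp only [Phi0_apply]
  rw [← Finsupp.sum_add]
  rw [Finsupp.sum]
  apply Finset.sum_eq_zero
  intro j _
  have hF : ∀ x : ℂ, (f.comp (X + C ((k : ℂ) / 2))).eval x = f.eval (x + (k : ℂ) / 2) := by
    intro x; simp [eval_comp]
  have hfe : ∀ x : ℂ, f.eval (-x) = (-1 : ℂ) ^ (k + 1) * f.eval x := by
    intro x
    have := congrArg (eval x) hf
    simpa [eval_comp, eval_smul] using this
  rw [hF, hF]
  have h1 : (-((j : ℂ))) + (k : ℂ) / 2 = -((j : ℂ) - (k : ℂ) / 2) := by ring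
  have h2 : (-((-j + k : ℤ) : ℂ)) + (k : ℂ) / 2 = (j : ℂ) - (k : ℂ) / 2 := by
    push_cast; ring
  rw [h1, h2, hfe]
  have hv : v (-(j - k)) = v (-j + k) := by ring_nf
  rw [hv]
  have hne : (-1 : ℂ) ≠ 0 := by norm_num
  have hz : (-1 : ℂ) ^ (k + 1) * (-1 : ℂ) ^ (j - k) = -(-1 : ℂ) ^ j := by
    rw [← zpow_add₀ hne]
    have : k + 1 + (j - k) = j + 1 := by ring
    rw [this, zpow_add₀ hne, zpow_one]
    ring
  linear_combination (u j * f.eval ((j : ℂ) - (k : ℂ) / 2) * v (-j + k)) * hz
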